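/- arXiv:2509.14079 — 2 statements merged into one kernel-verified Lean document; each statement's English description precedes it below -/
import Mathlib

section
/- Given σ_0 ∈ ℝ^k, a linear map σ_1 : ℝ^m → ℝ^k, and ε, r > 0, there exists λ > 0 such that the function s_λ : ℝ^m → ℝ^k defined by s_λ(v) = e^{−λ‖v‖²} σ_1(v) + σ_0 satisfies: (a) s_λ(0) = σ_0 and D_0 s_λ = σ_1; (b) sup_{v∈ℝ^m} ‖s_λ(v)‖ ≤ ‖σ_0‖ + ε; (c) sup_{v∈ℝ^m} ‖D_v s_λ‖ ≤ ‖σ_1‖ + ε; (d) sup_{‖v‖≥r} ‖D_v s_λ‖ ≤ ε. -/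
open scoped Manifold ENNReal Classical
open Function Set Topology Filter MeasureTheory

noncomputable section

/-- `ℝⁿ` with the Euclidean norm. -/
abbrev Euc (n : ℕ) : Type := EuclideanSpace ℝ (Fin n)

lemma jet_hasFDerivAt (m k : ℕ) (σ0 : Euc k) (σ1 : Euc m →L[ℝ] Euc k) (lam : ℝ) (v : Euc m) :
    HasFDerivAt (fun w : Euc m => Real.exp (-(lam * ‖w‖ ^ 2)) • σ1 w + σ0)
      (Real.exp (-(lam * ‖v‖ ^ 2)) •
        (σ1.comp (ContinuousLinearMap.id ℝ (Euc m) -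
          (2 * lam) • (innerSL ℝ v).smulRight v))) v := by
  have h1 : HasFDerivAt (fun w : Euc m => ‖w‖ ^ 2) ((2:ℕ) • (innerSL ℝ v)) v := by
    simpa using (hasFDerivAt_id v).norm_sq
  have h2 : HasFDerivAt (fun w : Euc m => -(lam * ‖w‖ ^ 2))
      (-((lam) • ((2:ℕ) • (innerSL ℝ v))) : Euc m →L[ℝ] ℝ) v := (h1.const_mul lam).neg
  have h5 := (h2.exp.smul (σ1.hasFDerivAt (x := v))).add_const σ0
  refine h5.congr_fderiv ?_
  ext w
  simp [ContinuousLinearMap.smul_apply, ContinuousLinearMap.smulRight_apply,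
    ContinuousLinearMap.comp_apply, ContinuousLinearMap.sub_apply, map_sub, _root_.map_smul,
    smul_smul, sub_eq_add_neg, real_inner_comm]
  left; ring

lemma M_bound {m : ℕ} (lam : ℝ) (hl : 0 ≤ lam) (v w : Euc m) :
    ‖w - (2 * lam * (inner ℝ v w : ℝ)) • v‖ ≤ max 1 (2 * lam * ‖v‖ ^ 2 - 1) * ‖w‖ := by
  have hmax : (1:ℝ) ≤ max 1 (2 * lam * ‖v‖ ^ 2 - 1) := le_max_left _ _
  apply le_of_pow_le_pow_left₀ two_ne_zero (by positivity)
  rw [mul_pow]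
  have hcs := real_inner_mul_inner_self_le v w
  have hexp : ‖w - (2 * lam * (inner ℝ v w : ℝ)) • v‖ ^ 2 =
      ‖w‖ ^ 2 - 4 * lam * (inner ℝ v w : ℝ)^2 + 4 * lam^2 * (inner ℝ v w : ℝ)^2 * ‖v‖ ^ 2 := by
    rw [norm_sub_sq_real, real_inner_smul_right, norm_smul]
    rw [real_inner_comm w v]
    simp [mul_pow, sq_abs]
    ring
  rcases le_or_gt (lam * ‖v‖ ^ 2) 1 with h | h
  · have hm : max 1 (2 * lam * ‖v‖ ^ 2 - 1) = 1 := max_eq_left (by nlinarith)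
    rw [hm, hexp]
    nlinarith [mul_nonneg hl (sq_nonneg (inner ℝ v w : ℝ))]
  · have hm : max 1 (2 * lam * ‖v‖ ^ 2 - 1) = 2 * lam * ‖v‖ ^ 2 - 1 :=
      max_eq_right (by nlinarith)
    rw [hm, hexp]
    have hcs' : (0:ℝ) ≤ ‖v‖^2 * ‖w‖^2 - (inner ℝ v w : ℝ)^2 := by
      rw [real_inner_self_eq_norm_sq, real_inner_self_eq_norm_sq] at hcs; nlinarith
    nlinarith [mul_nonneg (mul_nonneg hl (by linarith : (0:ℝ) ≤ lam * ‖v‖^2 - 1)) hcs']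

lemma exp_aux1 {t : ℝ} (ht : 0 ≤ t) : Real.exp (-t) * (2 * t - 1) ≤ 1 := by
  have h1 : 2 * t - 1 ≤ Real.exp t := by
    have h2 : t/2 + 1 ≤ Real.exp (t/2) := Real.add_one_le_exp _
    have he : Real.exp (t/2) * Real.exp (t/2) = Real.exp t := by
      rw [← Real.exp_add]; congr 1; ring
    nlinarith [Real.exp_pos (t/2), sq_nonneg (t - 2)]
  calc Real.exp (-t) * (2 * t - 1) ≤ Real.exp (-t) * Real.exp t := by
        exact mul_le_mul_of_nonneg_left h1 (Real.exp_nonneg _)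
    _ = 1 := by rw [← Real.exp_add]; simp

lemma exp_aux2 {t : ℝ} (ht : 0 ≤ t) : Real.exp (-t) * (1 + 2 * t) ≤ 5 * Real.exp (-(t/2)) := by
  have h2 : t/2 + 1 ≤ Real.exp (t/2) := Real.add_one_le_exp _
  have h1 : 1 + 2 * t ≤ 5 * Real.exp (t/2) := by nlinarith [Real.exp_pos (t/2)]
  calc Real.exp (-t) * (1 + 2 * t) ≤ Real.exp (-t) * (5 * Real.exp (t/2)) :=
        mul_le_mul_of_nonneg_left h1 (Real.exp_nonneg _)
    _ = 5 * Real.exp (-(t/2)) := by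
        rw [mul_comm (Real.exp (-t)), mul_assoc, ← Real.exp_add]; congr 2; ring

lemma D_norm_bound {m k : ℕ} (σ1 : Euc m →L[ℝ] Euc k) (lam : ℝ) (hl : 0 ≤ lam) (v : Euc m) :
    ‖(Real.exp (-(lam * ‖v‖ ^ 2)) • (σ1.comp (ContinuousLinearMap.id ℝ (Euc m) -
        (2 * lam) • (innerSL ℝ v).smulRight v)) : Euc m →L[ℝ] Euc k)‖
      ≤ Real.exp (-(lam * ‖v‖ ^ 2)) * (‖σ1‖ * max 1 (2 * lam * ‖v‖ ^ 2 - 1)) := by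
  have hmax0 : (0:ℝ) ≤ max 1 (2 * lam * ‖v‖ ^ 2 - 1) :=
    le_trans zero_le_one (le_max_left _ _)
  apply ContinuousLinearMap.opNorm_le_bound _
    (mul_nonneg (Real.exp_nonneg _) (mul_nonneg (norm_nonneg _) hmax0))
  intro w
  rw [ContinuousLinearMap.smul_apply, norm_smul, Real.norm_eq_abs,
    abs_of_nonneg (Real.exp_nonneg _), mul_assoc, mul_assoc]
  gcongr
  have happ : (σ1.comp (ContinuousLinearMap.id ℝ (Euc m) -
      (2 * lam) • (innerSL ℝ v).smulRight v)) w
      = σ1 (w - (2 * lam * (inner ℝ v w : ℝ)) • v) := by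
    simp [smul_smul, ← mul_assoc]
  rw [happ]
  calc ‖σ1 (w - (2 * lam * (inner ℝ v w : ℝ)) • v)‖
      ≤ ‖σ1‖ * ‖w - (2 * lam * (inner ℝ v w : ℝ)) • v‖ := σ1.le_opNorm _
    _ ≤ ‖σ1‖ * (max 1 (2 * lam * ‖v‖ ^ 2 - 1) * ‖w‖) :=
        mul_le_mul_of_nonneg_left (M_bound lam hl v w) (norm_nonneg _)


/-- The Gaussian cut-off of a first jet. Given `σ₀ ∈ ℝᵏ`, a linear map `σ₁ : ℝᵐ → ℝᵏ`
and `ε, r > 0`, there is `λ > 0` such that `s_λ(v) = e^{-λ‖v‖²} σ₁(v) + σ₀` satisfies: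
(a) `s_λ(0) = σ₀` and `D₀ s_λ = σ₁`; (b) `‖s_λ‖ ≤ ‖σ₀‖ + ε` everywhere;
(c) `‖D_v s_λ‖ ≤ ‖σ₁‖ + ε` everywhere; (d) `‖D_v s_λ‖ ≤ ε` for `‖v‖ ≥ r`. -/
theorem gaussian_jet_cutoff (m k : ℕ) (σ0 : Euc k) (σ1 : Euc m →L[ℝ] Euc k) (ε r : ℝ)
    (hε : 0 < ε) (hr : 0 < r) :
    ∃ lam : ℝ, 0 < lam ∧
      ((fun v : Euc m => Real.exp (-(lam * ‖v‖ ^ 2)) • σ1 v + σ0) 0 = σ0 ∧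
        fderiv ℝ (fun v : Euc m => Real.exp (-(lam * ‖v‖ ^ 2)) • σ1 v + σ0) 0 = σ1) ∧
      (∀ v : Euc m, ‖Real.exp (-(lam * ‖v‖ ^ 2)) • σ1 v + σ0‖ ≤ ‖σ0‖ + ε) ∧
      (∀ v : Euc m,
        ‖fderiv ℝ (fun w : Euc m => Real.exp (-(lam * ‖w‖ ^ 2)) • σ1 w + σ0) v‖ ≤ ‖σ1‖ + ε) ∧
      (∀ v : Euc m, r ≤ ‖v‖ →
        ‖fderiv ℝ (fun w : Euc m => Real.exp (-(lam * ‖w‖ ^ 2)) • σ1 w + σ0) v‖ ≤ ε) := by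
  set S := ‖σ1‖ with hS
  have hS0 : 0 ≤ S := norm_nonneg _
  set lam : ℝ := max (max 1 ((2/r^2) * Real.log (5*(S+1)/ε))) ((S+1)^2/ε^2) with hlamdef
  have hlam1 : (1:ℝ) ≤ lam := le_trans (le_max_left _ _) (le_max_left _ _)
  have hlam : 0 < lam := lt_of_lt_of_le one_pos hlam1
  have hlamlog : (2/r^2) * Real.log (5*(S+1)/ε) ≤ lam :=
    le_trans (le_max_right _ _) (le_max_left _ _)
  have hlamB : (S+1)^2/ε^2 ≤ lam := le_max_right _ _
  refine ⟨lam, hlam, ?_, ?_, ?_, ?_⟩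
  · constructor
    · simp
    · rw [(jet_hasFDerivAt m k σ0 σ1 lam 0).fderiv]
      ext w
      simp
  · -- (b) sup bound on s
    intro v
    have h1 : ‖Real.exp (-(lam * ‖v‖ ^ 2)) • σ1 v + σ0‖ ≤
        Real.exp (-(lam * ‖v‖ ^ 2)) * (S * ‖v‖) + ‖σ0‖ := by
      refine le_trans (norm_add_le _ _) (add_le_add_left ?_ _)
      rw [norm_smul, Real.norm_eq_abs, abs_of_nonneg (Real.exp_nonneg _)]
      exact mul_le_mul_of_nonneg_left (σ1.le_opNorm v) (Real.exp_nonneg _)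
    have hexple : Real.exp (-(lam * ‖v‖ ^ 2)) ≤ 1 / (1 + lam * ‖v‖ ^ 2) := by
      rw [le_div_iff₀ (by positivity)]
      have h4 : 1 + lam*‖v‖^2 ≤ Real.exp (lam*‖v‖^2) := by
        linarith [Real.add_one_le_exp (lam*‖v‖^2)]
      calc Real.exp (-(lam*‖v‖^2)) * (1+lam*‖v‖^2)
          ≤ Real.exp (-(lam*‖v‖^2)) * Real.exp (lam*‖v‖^2) :=
            mul_le_mul_of_nonneg_left h4 (Real.exp_nonneg _)
        _ = 1 := by rw [← Real.exp_add]; simp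
    have h2 : Real.exp (-(lam * ‖v‖ ^ 2)) * (S * ‖v‖) ≤ ε := by
      have hB : (S+1)^2 ≤ lam * ε^2 := by
        rw [div_le_iff₀ (by positivity)] at hlamB; linarith
      have key : S * ‖v‖ ≤ ε * (1 + lam * ‖v‖ ^ 2) := by
        have h3 : ε * (S * ‖v‖) ≤ ε * (ε * (1 + lam * ‖v‖ ^ 2)) := by
          nlinarith [sq_nonneg (ε - (S+1)*‖v‖), mul_nonneg (mul_nonneg hε.le hS0) (norm_nonneg v),
            mul_nonneg hε.le (norm_nonneg v), mul_le_mul_of_nonneg_right hB (sq_nonneg ‖v‖)]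
        exact le_of_mul_le_mul_left h3 hε
      calc Real.exp (-(lam * ‖v‖ ^ 2)) * (S * ‖v‖)
          ≤ (1 / (1 + lam * ‖v‖ ^ 2)) * (ε * (1 + lam * ‖v‖ ^ 2)) := by
            apply mul_le_mul hexple key (by positivity) (by positivity)
        _ = ε := by field_simp
    linarith [h1, h2]
  · -- (c)
    intro v
    rw [(jet_hasFDerivAt m k σ0 σ1 lam v).fderiv]
    refine le_trans (D_norm_bound σ1 lam hlam.le v) ?_
    have hkey : Real.exp (-(lam * ‖v‖ ^ 2)) * max 1 (2 * lam * ‖v‖ ^ 2 - 1) ≤ 1 := by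
      rcases le_total (2 * lam * ‖v‖ ^ 2 - 1) 1 with h | h
      · rw [max_eq_left h]
        simpa using Real.exp_le_one_iff.2 (neg_nonpos.2 (by positivity))
      · rw [max_eq_right h]
        have := exp_aux1 (t := lam * ‖v‖ ^ 2) (by positivity)
        calc Real.exp (-(lam * ‖v‖ ^ 2)) * (2 * lam * ‖v‖ ^ 2 - 1)
            = Real.exp (-(lam * ‖v‖ ^ 2)) * (2 * (lam * ‖v‖ ^ 2) - 1) := by ring
          _ ≤ 1 := this
    have : Real.exp (-(lam * ‖v‖ ^ 2)) * (S * max 1 (2 * lam * ‖v‖ ^ 2 - 1))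
        = S * (Real.exp (-(lam * ‖v‖ ^ 2)) * max 1 (2 * lam * ‖v‖ ^ 2 - 1)) := by ring
    rw [this]
    nlinarith [mul_le_mul_of_nonneg_left hkey hS0]
  · -- (d)
    intro v hv
    rw [(jet_hasFDerivAt m k σ0 σ1 lam v).fderiv]
    refine le_trans (D_norm_bound σ1 lam hlam.le v) ?_
    set t := lam * ‖v‖ ^ 2 with ht
    have ht0 : 0 ≤ t := by positivity
    have htT : lam * r ^ 2 ≤ t :=
      mul_le_mul_of_nonneg_left (pow_le_pow_left₀ hr.le hv 2) hlam.le
    have hmaxle : max 1 (2 * lam * ‖v‖ ^ 2 - 1) ≤ 1 + 2 * t := by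
      rw [ht]
      exact max_le (by nlinarith) (by nlinarith)
    have step1 : Real.exp (-t) * (S * max 1 (2 * lam * ‖v‖ ^ 2 - 1))
        ≤ S * (Real.exp (-t) * (1 + 2 * t)) := by
      have := mul_le_mul_of_nonneg_left hmaxle (mul_nonneg hS0 (Real.exp_nonneg (-t)))
      nlinarith [this]
    have step2 : S * (Real.exp (-t) * (1 + 2 * t)) ≤ S * (5 * Real.exp (-(t/2))) :=
      mul_le_mul_of_nonneg_left (exp_aux2 ht0) hS0
    have step3 : Real.exp (-(t/2)) ≤ Real.exp (-(lam * r ^ 2 / 2)) := by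
      apply Real.exp_le_exp.2; linarith
    have hL : Real.log (5*(S+1)/ε) ≤ lam * r ^ 2 / 2 := by
      have h5 : (2/r^2) * Real.log (5*(S+1)/ε) * (r^2/2) = Real.log (5*(S+1)/ε) := by
        field_simp
      nlinarith [mul_le_mul_of_nonneg_right hlamlog (by positivity : (0:ℝ) ≤ r^2/2)]
    have hexpL : Real.exp (-(lam * r ^ 2 / 2)) ≤ ε / (5*(S+1)) := by
      rw [Real.exp_neg]
      rw [inv_le_comm₀ (Real.exp_pos _) (by positivity)]
      calc ((ε / (5*(S+1)))⁻¹ : ℝ) = 5*(S+1)/ε := by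
            rw [inv_div]
        _ = Real.exp (Real.log (5*(S+1)/ε)) := (Real.exp_log (by positivity)).symm
        _ ≤ Real.exp (lam * r ^ 2 / 2) := Real.exp_le_exp.2 hL
    have final : S * (5 * Real.exp (-(lam * r ^ 2 / 2))) ≤ ε := by
      have h6 : S * (5 * (ε / (5*(S+1)))) ≤ ε := by
        have hfrac : S/(S+1) ≤ 1 := div_le_one_of_le₀ (by linarith) (by positivity)
        have heq : S * (5 * (ε / (5*(S+1)))) = ε * (S/(S+1)) := by
          field_simp
        rw [heq]
        calc ε * (S/(S+1)) ≤ ε * 1 := mul_le_mul_of_nonneg_left hfrac hε.le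
          _ = ε := mul_one ε
      calc S * (5 * Real.exp (-(lam * r ^ 2 / 2))) ≤ S * (5 * (ε / (5*(S+1)))) := by
            exact mul_le_mul_of_nonneg_left (by linarith [mul_le_mul_of_nonneg_left hexpL (by norm_num : (0:ℝ) ≤ 5)]) hS0
        _ ≤ ε := h6
    calc Real.exp (-t) * (S * max 1 (2 * lam * ‖v‖ ^ 2 - 1))
        ≤ S * (5 * Real.exp (-(t/2))) := le_trans step1 step2
      _ ≤ S * (5 * Real.exp (-(lam * r ^ 2 / 2))) := by
          exact mul_le_mul_of_nonneg_left (by linarith [mul_le_mul_of_nonneg_left step3 (by norm_num : (0:ℝ) ≤ 5)]) hS0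
      _ ≤ ε := final
end
end

section
/- Let F = {f_1,…,f_s} ⊆ C^1(M,ℝ) be a regular family on a compact Riemannian manifold M, and let S = ⋃_i ⋂_{j=1}^s {f_j *_{ij} 0} be a semialgebraic-type set on F with *_{ij} ∈ {<,>,=}. Then the closure of S is given by replacing each strict relation with its closed counterpart: cl(S) = ⋃_i ⋂_{j=1}^s {f_j \bar*_{ij} 0}, where \bar*_{ij} is ≤, ≥, or = according as *_{ij} is <, >, or =. -/
open scoped Manifold ENNReal Classical
open Function Set Topology Filter MeasureTheory

noncomputable section

/-- A Riemannian metric on a smooth manifold `M` modelled on `ℝᵐ`: a smooth, symmetric,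
positive definite family of inner products on the tangent spaces. -/
structure RiemannianMetric (m : ℕ) (M : Type) [TopologicalSpace M] [ChartedSpace (Euc m) M]
    [IsManifold (𝓡 m) (⊤ : ℕ∞) M] where
  inn : ∀ x : M, TangentSpace (𝓡 m) x → TangentSpace (𝓡 m) x → ℝ
  symm : ∀ x u v, inn x u v = inn x v u
  add_left : ∀ x u v w, inn x (u + v) w = inn x u w + inn x v w
  smul_left : ∀ (x : M) (c : ℝ) (u v : TangentSpace (𝓡 m) x), inn x (c • u) v = c * inn x u v
  posdef : ∀ (x : M) (v : TangentSpace (𝓡 m) x), v ≠ 0 → 0 < inn x v v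
  smooth : ContMDiff (𝓡 m).tangent 𝓘(ℝ, ℝ) (⊤ : ℕ∞)
      (fun p : TangentBundle (𝓡 m) M => inn p.proj p.2 p.2)

/-- The norm of a tangent vector with respect to a Riemannian metric. -/
def RiemannianMetric.tnorm {m : ℕ} {M : Type} [TopologicalSpace M] [ChartedSpace (Euc m) M]
    [IsManifold (𝓡 m) (⊤ : ℕ∞) M] (g : RiemannianMetric m M) (x : M)
    (v : TangentSpace (𝓡 m) x) : ℝ :=
  Real.sqrt (g.inn x v v)

/-- The differential of a map `f : M → ℝ^ι` at `x`, as a continuous linear map from the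
tangent space at `x` to `ℝ^ι`. -/
def mfd (m : ℕ) {M : Type} [TopologicalSpace M] [ChartedSpace (Euc m) M] {ι : Type} [Fintype ι]
    (f : M → EuclideanSpace ℝ ι) (x : M) :
    TangentSpace (𝓡 m) x →L[ℝ] EuclideanSpace ℝ ι :=
  mfderiv (𝓡 m) 𝓘(ℝ, EuclideanSpace ℝ ι) f x

/-- The operator norm, with respect to the Riemannian metric `g` on the tangent space and
the Euclidean norm on the target, of a linear map defined on a tangent space. -/
def opNormAt {m : ℕ} {M : Type} [TopologicalSpace M] [ChartedSpace (Euc m) M]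
    [IsManifold (𝓡 m) (⊤ : ℕ∞) M] (g : RiemannianMetric m M) (x : M)
    {ι : Type} [Fintype ι] (A : TangentSpace (𝓡 m) x →ₗ[ℝ] EuclideanSpace ℝ ι) : ℝ :=
  sSup ((fun v => ‖A v‖) '' {v | g.tnorm x v = 1})

/-- The `C¹`-norm of a map `f : M → ℝ^ι` with respect to a Riemannian metric `g`:
`max_x (‖f x‖ + ‖D_x f‖)`. -/
def C1Norm {m : ℕ} {M : Type} [TopologicalSpace M] [ChartedSpace (Euc m) M]
    [IsManifold (𝓡 m) (⊤ : ℕ∞) M] (g : RiemannianMetric m M)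
    {ι : Type} [Fintype ι] (f : M → EuclideanSpace ℝ ι) : ℝ :=
  ⨆ x : M, (‖f x‖ + opNormAt g x (mfd m f x).toLinearMap)

/-- The `C⁰`-norm of a map `f : M → ℝ^ι`. -/
def C0Norm {M : Type} {ι : Type} [Fintype ι] (f : M → EuclideanSpace ℝ ι) : ℝ :=
  ⨆ x : M, ‖f x‖

/-- `f : M → ℝ^ι` is of class `C¹`. -/
def IsC1 (m : ℕ) {M : Type} [TopologicalSpace M] [ChartedSpace (Euc m) M] {ι : Type} [Fintype ι]
    (f : M → EuclideanSpace ℝ ι) : Prop :=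
  ContMDiff (𝓡 m) 𝓘(ℝ, EuclideanSpace ℝ ι) 1 f

/-- The discriminant: the set of `C¹` maps `M → ℝ^ι` having a singular zero. -/
def Discr (m : ℕ) (M : Type) [TopologicalSpace M] [ChartedSpace (Euc m) M]
    (ι : Type) [Fintype ι] : Set (M → EuclideanSpace ℝ ι) :=
  {h | IsC1 m h ∧ ∃ x : M, h x = 0 ∧
    LinearMap.rank (mfd m h x).toLinearMap < (Fintype.card ι : Cardinal)}

/-- The `C¹`-distance of `f` from the discriminant `Δ`. -/
def distDiscr {m : ℕ} {M : Type} [TopologicalSpace M] [ChartedSpace (Euc m) M]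
    [IsManifold (𝓡 m) (⊤ : ℕ∞) M] (g : RiemannianMetric m M)
    {ι : Type} [Fintype ι] (f : M → EuclideanSpace ℝ ι) : ℝ :=
  sInf ((fun h => C1Norm g (fun x => f x - h x)) '' Discr m M ι)

/-- The map `M → ℝˢ` associated with a finite family of functions `f i : M → ℝ`. -/
def famMap {M : Type} {s : ℕ} (f : Fin s → M → ℝ) : M → EuclideanSpace ℝ (Fin s) :=
  fun x => WithLp.toLp 2 (fun i => f i x : Fin s → ℝ)

/-- A map `h : M → ℝˢ` is transversal at `x` to the orthant stratification of `ℝˢ`: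
the projection of `D_x h` onto the coordinates vanishing at `x` is surjective. -/
def TransvOrthAt (m : ℕ) {M : Type} [TopologicalSpace M] [ChartedSpace (Euc m) M] {s : ℕ}
    (h : M → EuclideanSpace ℝ (Fin s)) (x : M) : Prop :=
  Function.Surjective (fun v : TangentSpace (𝓡 m) x =>
    ((fun j => mfd m h x v j.1) : {i : Fin s // h x i = 0} → ℝ))

/-- The discriminant for families: `C¹` maps `M → ℝˢ` that are not transversal to the
orthant stratification of `ℝˢ`. -/
def DiscrFam (m : ℕ) (M : Type) [TopologicalSpace M] [ChartedSpace (Euc m) M] (s : ℕ) :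
    Set (M → EuclideanSpace ℝ (Fin s)) :=
  {h | IsC1 m h ∧ ¬ ∀ x : M, TransvOrthAt m h x}

/-- The distance `δ(ℱ)` of a family from the discriminant for families. -/
def deltaFam {m : ℕ} {M : Type} [TopologicalSpace M] [ChartedSpace (Euc m) M]
    [IsManifold (𝓡 m) (⊤ : ℕ∞) M] (g : RiemannianMetric m M) {s : ℕ}
    (f : Fin s → M → ℝ) : ℝ :=
  sInf ((fun h => C1Norm g (fun x => famMap f x - h x)) '' DiscrFam m M s)

/-- The restriction of a family to a subset `J` of its indices, as a map `M → ℝᴶ`. -/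
def restrFam {M : Type} {s : ℕ} (f : Fin s → M → ℝ) (J : Finset (Fin s)) :
    M → EuclideanSpace ℝ {j // j ∈ J} :=
  fun x => WithLp.toLp 2 (fun j => f j.1 x : {j // j ∈ J} → ℝ)

/-- Sign relations `<, >, =`. -/
inductive SRel | lt | gt | eq

/-- The condition defined by a sign relation. -/
def SRel.holds : SRel → ℝ → Prop
  | .lt, t => t < 0
  | .gt, t => 0 < t
  | .eq, t => t = 0

/-- Closed sign relations `≤, ≥, =`. -/
inductive CRel | le | ge | eq

/-- The condition defined by a closed sign relation. -/
def CRel.holds : CRel → ℝ → Prop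
  | .le, t => t ≤ 0
  | .ge, t => 0 ≤ t
  | .eq, t => t = 0

/-- The closed relation associated with a sign relation. -/
def SRel.toCRel : SRel → CRel
  | .lt => .le
  | .gt => .ge
  | .eq => .eq

/-- `S` is a semialgebraic-type set on the family `f`. -/
def IsSAT {M : Type} {s : ℕ} (f : Fin s → M → ℝ) (S : Set M) : Prop :=
  ∃ (N : ℕ) (c : Fin N → Fin s → SRel),
    S = ⋃ i, ⋂ j, {x : M | (c i j).holds (f j x)}

/-- `S` is a closed semialgebraic-type set on the family `f`. -/
def IsClosedSAT {M : Type} {s : ℕ} (f : Fin s → M → ℝ) (S : Set M) : Prop :=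
  ∃ (N : ℕ) (c : Fin N → Fin s → CRel),
    S = ⋃ i, ⋂ j, {x : M | (c i j).holds (f j x)}

/-- Target value for a sign relation. -/
private def srelTarget : SRel → ℝ
  | .lt => -1
  | .gt => 1
  | .eq => 0

private lemma srel_holds_mul {r : SRel} {ε : ℝ} (hε : 0 < ε) :
    r.holds (ε * srelTarget r) := by
  cases r <;> simp only [SRel.holds, srelTarget]
  · nlinarith
  · nlinarith
  · ring

/-- For a regular family `ℱ = {f₁, …, fₛ}` on a compact Riemannian manifold, the closure of
a semialgebraic-type set is obtained by replacing each strict relation with its closed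
counterpart. -/
theorem closure_of_sat (m s : ℕ) (M : Type) [TopologicalSpace M] [ChartedSpace (Euc m) M]
    [IsManifold (𝓡 m) (⊤ : ℕ∞) M] [CompactSpace M] (g : RiemannianMetric m M)
    (f : Fin s → M → ℝ) (hf : IsC1 m (famMap f))
    (hreg : ∀ (J : Finset (Fin s)) (x : M), (∀ j ∈ J, f j x = 0) →
      Function.Surjective (fun v : TangentSpace (𝓡 m) x =>
        ((fun j => mfd m (famMap f) x v j.1) : {j // j ∈ J} → ℝ)))
    (N : ℕ) (c : Fin N → Fin s → SRel) :
    closure (⋃ i, ⋂ j, {x : M | (c i j).holds (f j x)}) =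
      ⋃ i, ⋂ j, {x : M | ((c i j).toCRel).holds (f j x)} := by
  classical
  have hcontf : ∀ j : Fin s, Continuous (fun y : M => f j y) := by
    intro j
    exact (EuclideanSpace.proj (𝕜 := ℝ) j).continuous.comp hf.continuous
  apply Subset.antisymm
  · apply closure_minimal
    · refine iUnion_mono fun i => iInter_mono fun j => fun y hy => ?_
      simp only [mem_setOf_eq] at hy ⊢
      cases hc : c i j <;> rw [hc] at hy <;>
        simp only [SRel.holds, SRel.toCRel, CRel.holds] at hy ⊢
      · exact le_of_lt hy
      · exact le_of_lt hy
      · exact hy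
    · refine isClosed_iUnion_of_finite fun i => isClosed_iInter fun j => ?_
      cases hc : c i j <;> simp only [hc, SRel.toCRel, CRel.holds]
      · exact isClosed_le (hcontf j) continuous_const
      · exact isClosed_le continuous_const (hcontf j)
      · exact isClosed_eq (hcontf j) continuous_const
  · intro x hx
    simp only [mem_iUnion, mem_iInter, mem_setOf_eq] at hx
    obtain ⟨i, hi⟩ := hx
    refine closure_mono (subset_iUnion (fun i => ⋂ j, {y : M | (c i j).holds (f j y)}) i) ?_
    set J : Finset (Fin s) := Finset.univ.filter (fun j => f j x = 0) with hJdef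
    have hJ0 : ∀ j ∈ J, f j x = 0 := by
      intro j hj; simpa [hJdef] using hj
    -- the projection onto the coordinates in `J`
    let L : EuclideanSpace ℝ (Fin s) →L[ℝ] EuclideanSpace ℝ {j // j ∈ J} :=
      LinearMap.toContinuousLinearMap
        { toFun := fun y => WithLp.toLp 2 (fun j => y j.1 : {j // j ∈ J} → ℝ)
          map_add' := fun a b => rfl
          map_smul' := fun r a => rfl }
    set p : Euc m := (extChartAt (𝓡 m) x) x with hp
    set F : Euc m → EuclideanSpace ℝ (Fin s) :=
      famMap f ∘ (extChartAt (𝓡 m) x).symm with hF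
    have hC1 : ContMDiffAt (𝓡 m) 𝓘(ℝ, EuclideanSpace ℝ (Fin s)) 1 (famMap f) x := hf x
    have hcd : ContDiffAt ℝ 1 F p := by
      have h2 := (contMDiffAt_iff.1 hC1).2
      simp only [extChartAt_model_space_eq_id, PartialEquiv.refl_coe, Function.id_comp,
        modelWithCornersSelf_coe, Set.range_id, contDiffWithinAt_univ] at h2
      exact h2
    have hdiff : MDifferentiableAt (𝓡 m) 𝓘(ℝ, EuclideanSpace ℝ (Fin s)) (famMap f) x :=
      hC1.mdifferentiableAt one_ne_zero
    have hmfd : (mfd m (famMap f) x : Euc m →L[ℝ] EuclideanSpace ℝ (Fin s))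
        = fderiv ℝ F p := by
      rw [mfd, hdiff.mfderiv]
      simp only [writtenInExtChartAt, extChartAt_model_space_eq_id, PartialEquiv.refl_coe,
        Function.id_comp, modelWithCornersSelf_coe, Set.range_id, fderivWithin_univ, hF, hp]
      rfl
    have hstrict : HasStrictFDerivAt F (fderiv ℝ F p) p := hcd.hasStrictFDerivAt one_ne_zero
    have hstrictG : HasStrictFDerivAt (fun q => L (F q)) (L.comp (fderiv ℝ F p)) p :=
      (L.hasStrictFDerivAt).comp p hstrict
    have hcoe : ∀ (v : Euc m) (j : {j // j ∈ J}),
        (L.comp (fderiv ℝ F p)) v j = mfd m (famMap f) x v j.1 := by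
      intro v j
      rw [hmfd]
      rfl
    have hrange : LinearMap.range ((L.comp (fderiv ℝ F p) : Euc m →L[ℝ]
        EuclideanSpace ℝ {j // j ∈ J}) : Euc m →ₗ[ℝ] EuclideanSpace ℝ {j // j ∈ J}) = ⊤ := by
      rw [LinearMap.range_eq_top]
      intro y
      obtain ⟨v, hv⟩ := hreg J x hJ0 y
      exact ⟨v, PiLp.ext fun j => (hcoe v j).trans (congrFun hv j)⟩
    have hmap : Filter.map (fun q => L (F q)) (𝓝 p) = 𝓝 (L (F p)) :=
      hstrictG.map_nhds_eq_of_surj hrange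
    have hFp : F p = famMap f x := by
      rw [hF, hp]; simp only [Function.comp_apply, extChartAt_to_inv]
    have hLFp : L (F p) = 0 := by
      rw [hFp]
      exact PiLp.ext fun j => hJ0 j.1 j.2
    rw [mem_closure_iff_nhds]
    intro U hU
    have hnbhd : ∀ j : Fin s, j ∉ J → {y : M | (c i j).holds (f j y)} ∈ 𝓝 x := by
      intro j hj
      have hne : f j x ≠ 0 := by simpa [hJdef] using hj
      have hcj := hi j
      cases hc : c i j <;> rw [hc] at hcj <;>
        simp only [SRel.toCRel, CRel.holds] at hcj
      · have hlt : f j x < 0 := lt_of_le_of_ne hcj hne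
        refine (isOpen_lt (hcontf j) continuous_const).mem_nhds ?_
        simpa [SRel.holds] using hlt
      · have hgt : (0 : ℝ) < f j x := lt_of_le_of_ne hcj (Ne.symm hne)
        refine (isOpen_lt continuous_const (hcontf j)).mem_nhds ?_
        simpa [SRel.holds] using hgt
      · exact absurd hcj hne
    have hO : {y : M | ∀ j, j ∉ J → (c i j).holds (f j y)} ∈ 𝓝 x := by
      have heq : {y : M | ∀ j, j ∉ J → (c i j).holds (f j y)}
          = ⋂ j, {y : M | j ∉ J → (c i j).holds (f j y)} := by
        ext y; simp only [mem_setOf_eq, mem_iInter]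
      rw [heq]
      refine Filter.iInter_mem.2 fun j => ?_
      by_cases hj : j ∈ J
      · exact Filter.mem_of_superset Filter.univ_mem fun y _ hj' => absurd hj hj'
      · exact Filter.mem_of_superset (hnbhd j hj) fun y hy _ => hy
    have hV : U ∩ {y : M | ∀ j, j ∉ J → (c i j).holds (f j y)} ∈ 𝓝 x :=
      Filter.inter_mem hU hO
    have hW : (extChartAt (𝓡 m) x).symm ⁻¹'
        (U ∩ {y : M | ∀ j, j ∉ J → (c i j).holds (f j y)}) ∈ 𝓝 p := by
      refine (continuousAt_extChartAt_symm x).preimage_mem_nhds ?_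
      rw [extChartAt_to_inv]
      exact hV
    have hImg : (fun q => L (F q)) '' ((extChartAt (𝓡 m) x).symm ⁻¹'
        (U ∩ {y : M | ∀ j, j ∉ J → (c i j).holds (f j y)}))
        ∈ 𝓝 (0 : EuclideanSpace ℝ {j // j ∈ J}) := by
      rw [← hLFp, ← hmap]
      exact Filter.image_mem_map hW
    set u : EuclideanSpace ℝ {j // j ∈ J} :=
      WithLp.toLp 2 (fun j => srelTarget (c i j.1) : {j // j ∈ J} → ℝ) with hu
    have htend : Filter.Tendsto (fun ε : ℝ => ε • u) (𝓝[>] (0 : ℝ)) (𝓝 0) := by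
      have h1 : Filter.Tendsto (fun ε : ℝ => ε • u) (𝓝 (0 : ℝ)) (𝓝 ((0 : ℝ) • u)) :=
        (continuous_id.smul continuous_const).tendsto 0
      rw [zero_smul] at h1
      exact h1.mono_left nhdsWithin_le_nhds
    obtain ⟨ε, hεI, hεpos⟩ := Filter.nonempty_of_mem (Filter.inter_mem (Filter.mem_map.1 (htend hImg))
      (self_mem_nhdsWithin : Set.Ioi (0:ℝ) ∈ 𝓝[>] (0:ℝ)))
    obtain ⟨q, hq, hGq⟩ := hεI
    set y : M := (extChartAt (𝓡 m) x).symm q with hy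
    refine ⟨y, hq.1, ?_⟩
    rw [mem_iInter]
    intro j
    by_cases hj : j ∈ J
    · have h1 : L (F q) ⟨j, hj⟩ = (ε • u) ⟨j, hj⟩ := congrArg (fun w => w ⟨j, hj⟩) hGq
      have hval : f j y = ε * srelTarget (c i j) := h1
      show (c i j).holds (f j y)
      rw [hval]
      exact srel_holds_mul hεpos
    · exact hq.2 j hj
end
end
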